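/- Let (A, m, v) be a C*-Frobenius algebra in Hilb_f and let (X, m_X) be a left A-module in Hilb_f. Then the condition (m ⊗ id_X)(id_A ⊗ m_X*) = m_X* m_X holds if and only if m_X = (v* m ⊗ id_X)(id_A ⊗ m_X*). -/

import Mathlib

/-!
STATEMENT 3.  Let (A, m, v) be a C*-Frobenius algebra in Hilb_f and (X, m_X) a left A-module
in Hilb_f.  Then (m ⊗ id_X)(id_A ⊗ m_X*) = m_X* m_X  if and only if
m_X = (v* m ⊗ id_X)(id_A ⊗ m_X*).

Both sides are expressed elementwise on pure tensors a ⊗ x.  The left condition reads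
TensorProduct.map (m a) id (m_X* x) = m_X*(m_X a x).  For the right condition, note that
v* = ⟪e, ·⟫ (with e = v(1)), so v* m : A ⊗ A → ℂ applied after a ⊗ (·) is the functional
(innerₛₗ ℂ e) ∘ₗ (m a); then (v* m ⊗ id_X) followed by the canonical identification
ℂ ⊗ X ≅ X (TensorProduct.lid) gives the stated map.
-/

open scoped TensorProduct

/-- The linear functional `⟪a ⊗ b, ·⟫` on `E ⊗[ℂ] F` induced by the inner products. -/
noncomputable def tensPair {E F : Type*} [NormedAddCommGroup E] [InnerProductSpace ℂ E]
    [NormedAddCommGroup F] [InnerProductSpace ℂ F] (a : E) (b : F) :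
    TensorProduct ℂ E F →ₗ[ℂ] ℂ :=
  TensorProduct.lift ((LinearMap.mul ℂ ℂ).compl₁₂ (innerₛₗ ℂ a) (innerₛₗ ℂ b))

section auxTensPair
variable {E F : Type*} [NormedAddCommGroup E] [InnerProductSpace ℂ E]
    [NormedAddCommGroup F] [InnerProductSpace ℂ F]

lemma tensPair_tmul (a c : E) (b d : F) :
    tensPair a b (c ⊗ₜ[ℂ] d) = (inner ℂ a c : ℂ) * (inner ℂ b d : ℂ) := by
  simp [tensPair]

lemma tensPair_map [FiniteDimensional ℂ E] (f : E →ₗ[ℂ] E) (a : E) (b : F) (t : E ⊗[ℂ] F) :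
    tensPair a b (TensorProduct.map f LinearMap.id t)
      = tensPair (LinearMap.adjoint f a) b t := by
  induction t using TensorProduct.induction_on with
  | zero => simp
  | tmul c d => simp [tensPair_tmul, LinearMap.adjoint_inner_left]
  | add x y hx hy => simp [hx, hy]

lemma lid_inner (c : E) (w : F) (t : E ⊗[ℂ] F) :
    (inner ℂ w (TensorProduct.lid ℂ F (TensorProduct.map (innerₛₗ ℂ c) LinearMap.id t)) : ℂ)
      = tensPair c w t := by
  induction t using TensorProduct.induction_on with
  | zero => simp
  | tmul u d => simp [tensPair_tmul, inner_smul_right, mul_comm]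
  | add x y hx hy => simp [hx, hy, inner_add_right]

lemma tensPair_ext [FiniteDimensional ℂ E] [FiniteDimensional ℂ F] {t t' : E ⊗[ℂ] F}
    (h : ∀ a b, tensPair a b t = tensPair a b t') : t = t' := by
  classical
  set bE := stdOrthonormalBasis ℂ E
  set bF := stdOrthonormalBasis ℂ F
  set B := bE.toBasis.tensorProduct bF.toBasis with hB
  apply B.ext_elem
  rintro ⟨k, l⟩
  have key : ∀ s : E ⊗[ℂ] F,
      (Finsupp.lapply (k, l) ∘ₗ (B.repr : E ⊗[ℂ] F →ₗ[ℂ] _)) s = tensPair (bE k) (bF l) s := by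
    intro s
    refine LinearMap.congr_fun (B.ext fun ⟨i, j⟩ => ?_) s
    have hE := (orthonormal_iff_ite.mp bE.orthonormal) k i
    have hF := (orthonormal_iff_ite.mp bF.orthonormal) l j
    simp only [hB, LinearMap.comp_apply, LinearEquiv.coe_coe, Module.Basis.tensorProduct_apply,
      Module.Basis.repr_self, Finsupp.lapply_apply, Finsupp.single_apply, Prod.ext_iff,
      OrthonormalBasis.coe_toBasis, tensPair_tmul, hE, hF, ite_and]
    by_cases hk : k = i <;> by_cases hl : l = j <;>
      simp [hk, hl, eq_comm]
  have h1 := key t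
  have h2 := key t'
  simp only [LinearMap.comp_apply, LinearEquiv.coe_coe, Finsupp.lapply_apply] at h1 h2
  rw [h1, h2, h]

end auxTensPair

theorem statement3 {A X : Type*} [NormedAddCommGroup A] [InnerProductSpace ℂ A]
    [FiniteDimensional ℂ A] [NormedAddCommGroup X] [InnerProductSpace ℂ X]
    [FiniteDimensional ℂ X]
    -- the C*-Frobenius algebra (A, m, v) with e = v(1):
    (m : A →ₗ[ℂ] A →ₗ[ℂ] A) (e : A)
    (hassoc : ∀ a b c : A, m (m a b) c = m a (m b c))
    (hul : ∀ a : A, m e a = a) (hur : ∀ a : A, m a e = a)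
    (mstar : A → TensorProduct ℂ A A)
    (hadj : ∀ a b y : A, tensPair a b (mstar y) = (inner ℂ (m a b) y : ℂ))
    (hfrob₁ : ∀ a b : A,
      TensorProduct.map (m a) LinearMap.id (mstar b) = mstar (m a b))
    (hfrob₂ : ∀ a b : A,
      TensorProduct.map LinearMap.id (m.flip b) (mstar a) = mstar (m a b))
    -- the left A-module (X, m_X) in Hilb_f and the adjoint m_X*:
    (mX : A →ₗ[ℂ] X →ₗ[ℂ] X)
    (hmod : ∀ (a b : A) (x : X), mX (m a b) x = mX a (mX b x))
    (hmodu : ∀ x : X, mX e x = x)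
    (mXstar : X → TensorProduct ℂ A X)
    (hadjX : ∀ (a : A) (x y : X), tensPair a x (mXstar y) = (inner ℂ (mX a x) y : ℂ)) :
    -- (m ⊗ id)(id ⊗ m_X*) = m_X* m_X  ⇔  m_X = (v* m ⊗ id)(id ⊗ m_X*):
    (∀ (a : A) (x : X),
        TensorProduct.map (m a) LinearMap.id (mXstar x) = mXstar (mX a x)) ↔
      (∀ (a : A) (x : X),
        mX a x = TensorProduct.lid ℂ X
          (TensorProduct.map ((innerₛₗ ℂ e) ∘ₗ (m a)) LinearMap.id (mXstar x))) := by
  have hcomp : ∀ a : A,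
      (innerₛₗ ℂ e) ∘ₗ (m a) = innerₛₗ ℂ (LinearMap.adjoint (m a) e) := by
    intro a; ext c; simp [LinearMap.adjoint_inner_left]
  have key : ∀ a b : A, m (LinearMap.adjoint (m a) e) b = LinearMap.adjoint (m a) b := by
    intro a b
    apply ext_inner_right ℂ
    intro c
    rw [← hadj, LinearMap.adjoint_inner_left, ← tensPair_map (m a) e b (mstar c),
      hfrob₁, hadj, hul]
  constructor
  · intro h a x
    apply ext_inner_left ℂ
    intro z
    rw [hcomp, lid_inner, ← tensPair_map, h a x, hadjX, hmodu]
  · intro h a x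
    apply tensPair_ext
    intro b z
    rw [tensPair_map, hadjX, hadjX, h a x, hcomp, lid_inner, hadjX, ← hmod, key]
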